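/- arXiv:2506.03932 — 2 statements merged into one kernel-verified Lean document; each statement's English description precedes it below -/
import Mathlib

section
/- Let U be an m×n integer matrix and b ∈ ℤ^m. If the system Uy = b has a solution y ∈ ℤ^n, then it has a solution y whose entries satisfy max_i log|y_i| ≤ m·h + (1/2)·m·log m, where h is the maximum of the logarithms of the absolute values of the nonzero entries of U and b (with h ≥ 0). -/
open Matrix


open Matrix in
lemma hadamard_int {m : ℕ} (A : Matrix (Fin m) (Fin m) ℤ) (B : ℝ) (hB : 0 ≤ B)
    (h : ∀ i j, |((A i j : ℤ) : ℝ)| ≤ B) :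
    |((A.det : ℤ) : ℝ)| ≤ (Real.sqrt m * B) ^ m := by
  haveI : Fact (Module.finrank ℝ (EuclideanSpace ℝ (Fin m)) = m) :=
    ⟨finrank_euclideanSpace_fin⟩
  set b₀ : OrthonormalBasis (Fin m) ℝ (EuclideanSpace ℝ (Fin m)) :=
    EuclideanSpace.basisFun (Fin m) ℝ
  set o : Orientation ℝ (EuclideanSpace ℝ (Fin m)) (Fin m) := b₀.toBasis.orientation
  have hvol : o.volumeForm = b₀.toBasis.det := o.volumeForm_robust b₀ rfl
  set v : Fin m → EuclideanSpace ℝ (Fin m) :=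
    fun j => (WithLp.equiv 2 (Fin m → ℝ)).symm (fun i => (A i j : ℝ))
  have hdet : b₀.toBasis.det v = ((A.map (Int.cast : ℤ → ℝ)).det) := by
    rw [Module.Basis.det_apply]
    congr 1
  have key : |b₀.toBasis.det v| ≤ ∏ _i : Fin m, (Real.sqrt m * B) := by
    rw [← hvol]
    refine le_trans (o.abs_volumeForm_apply_le v) (Finset.prod_le_prod ?_ ?_)
    · intro i _; positivity
    · intro j _
      rw [EuclideanSpace.norm_eq]
      have hs : ∑ i : Fin m, ‖(v j) i‖ ^ 2 ≤ ∑ _i : Fin m, B ^ 2 := by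
        refine Finset.sum_le_sum fun i _ => ?_
        have h1 : ‖(v j) i‖ = |((A i j : ℤ) : ℝ)| := by
          simp [v, Real.norm_eq_abs]
        rw [h1]
        nlinarith [h i j, abs_nonneg ((A i j : ℤ) : ℝ)]
      calc √(∑ i : Fin m, ‖(v j) i‖ ^ 2) ≤ √(∑ _i : Fin m, B ^ 2) := Real.sqrt_le_sqrt hs
        _ = √((m : ℝ) * B ^ 2) := by rw [Finset.sum_const]; simp [mul_comm]
        _ = √(m : ℝ) * B := by
            rw [Real.sqrt_mul (by positivity), Real.sqrt_sq hB]
  have hcast : |((A.det : ℤ) : ℝ)| = |b₀.toBasis.det v| := by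
    rw [hdet]
    congr 1
    exact (RingHom.map_det (Int.castRingHom ℝ) A).symm ▸ rfl
  rw [hcast]
  simpa using key



lemma mulVecLin_injective_of_det_ne_zero {m : ℕ} {A : Matrix (Fin m) (Fin m) ℤ}
    (hA : A.det ≠ 0) : Function.Injective A.mulVecLin := by
  rw [injective_iff_map_eq_zero]
  intro v hv
  have h1 : A.adjugate *ᵥ (A *ᵥ v) = A.det • v := by
    rw [mulVec_mulVec, adjugate_mul, smul_mulVec, one_mulVec]
  have h2 : A *ᵥ v = 0 := hv
  rw [h2, mulVec_zero] at h1
  ext i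
  have : A.det * v i = 0 := (congrFun h1.symm i)
  exact (mul_eq_zero.mp this).resolve_left hA

lemma index_range_mulVecLin {m : ℕ} (A : Matrix (Fin m) (Fin m) ℤ) (hA : A.det ≠ 0) :
    (LinearMap.range A.mulVecLin).toAddSubgroup.index = A.det.natAbs := by
  classical
  set N := LinearMap.range A.mulVecLin with hN
  have inj := mulVecLin_injective_of_det_ne_zero hA
  obtain ⟨n, snf⟩ := N.smithNormalForm (Pi.basisFun ℤ (Fin m))
  set e : (Fin m → ℤ) ≃ₗ[ℤ] N := LinearEquiv.ofInjective A.mulVecLin inj with he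
  have hnm : n = m := by
    have e2 : Module.Basis (Fin n) ℤ (Fin m → ℤ) := snf.bN.map e.symm
    have := Fintype.card_congr (e2.indexEquiv (Pi.basisFun ℤ (Fin m)))
    simpa using this
  subst hnm
  have hbij : Function.Bijective snf.f :=
    (Finite.injective_iff_bijective).mp snf.f.injective
  set σ : Equiv.Perm (Fin n) := Equiv.ofBijective snf.f hbij with hσ
  have hindex : N.toAddSubgroup.index = ∏ i, (snf.a i).natAbs := by
    rw [snf.toAddSubgroup_index_eq_pow_mul_prod]
    simp only [Fintype.card_fin, Nat.sub_self, pow_zero, one_mul]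
    congr 1
    ext i
    rw [Ideal.span_singleton_toAddSubgroup_eq_zmultiples, Int.index_zmultiples]
  set e' : (Fin n → ℤ) ≃ₗ[ℤ] N := (snf.bM).equiv snf.bN (Equiv.refl _) with he'
  have hassoc := LinearMap.associated_det_comp_equiv
    ((N.subtype).restrictScalars ℤ) e e'
  have hdet1 : LinearMap.det (((N.subtype).restrictScalars ℤ) ∘ₗ (e : (Fin n → ℤ) →ₗ[ℤ] N))
      = A.det := by
    have h4 : ((N.subtype).restrictScalars ℤ) ∘ₗ (e : (Fin n → ℤ) →ₗ[ℤ] N) = A.mulVecLin :=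
      LinearMap.ext fun v => rfl
    rw [h4]
    have h3 : A.mulVecLin = Matrix.toLin' A := rfl
    rw [h3, LinearMap.det_toLin']
  have hdet2 : (LinearMap.det (((N.subtype).restrictScalars ℤ) ∘ₗ (e' : (Fin n → ℤ) →ₗ[ℤ] N))).natAbs
      = ∏ i, (snf.a i).natAbs := by
    rw [← LinearMap.det_toMatrix (snf.bM)]
    have hmat : LinearMap.toMatrix snf.bM snf.bM
        (((N.subtype).restrictScalars ℤ) ∘ₗ (e' : (Fin n → ℤ) →ₗ[ℤ] N))
        = (Matrix.diagonal snf.a).submatrix σ.symm id := by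
      ext i j
      rw [LinearMap.toMatrix_apply]
      have h5 : (((N.subtype).restrictScalars ℤ) ∘ₗ (e' : (Fin n → ℤ) →ₗ[ℤ] N)) (snf.bM j)
          = snf.a j • snf.bM (snf.f j) := by
        simp only [LinearMap.comp_apply, he']
        have : (snf.bM.equiv snf.bN (Equiv.refl _)) (snf.bM j) = snf.bN (Equiv.refl _ j) :=
          snf.bM.equiv_apply _ snf.bN _
        rw [show ((snf.bM.equiv snf.bN (Equiv.refl (Fin n))) : (Fin n → ℤ) →ₗ[ℤ] N) (snf.bM j)
            = (snf.bM.equiv snf.bN (Equiv.refl (Fin n))) (snf.bM j) from rfl, this]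
        simpa using (snf.snf j)
      rw [h5, _root_.map_smul, Module.Basis.repr_self, Finsupp.smul_single, smul_eq_mul, mul_one,
        Finsupp.single_apply, Matrix.submatrix_apply, Matrix.diagonal_apply, id]
      have hiff : (snf.f j = i) ↔ (σ.symm i = j) := by
        constructor
        · intro hh; rw [← hh]; exact σ.symm_apply_apply j
        · intro hh; rw [← hh]; exact σ.apply_symm_apply i
      by_cases hc : snf.f j = i
      · rw [if_pos hc, if_pos (hiff.mp hc), hiff.mp hc]
      · rw [if_neg hc, if_neg (fun hc2 => hc (hiff.mpr hc2))]
    rw [hmat]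
    rw [Matrix.det_permute σ.symm (Matrix.diagonal snf.a), Int.natAbs_mul, Matrix.det_diagonal]
    have h9 : ∀ u : ℤˣ, ((u : ℤ)).natAbs = 1 := fun u => Int.natAbs_of_isUnit u.isUnit
    simp only [Int.cast_id]
    rw [h9, one_mul]
    exact map_prod Int.natAbsHom snf.a Finset.univ
  calc N.toAddSubgroup.index = ∏ i, (snf.a i).natAbs := hindex
    _ = (LinearMap.det (((N.subtype).restrictScalars ℤ) ∘ₗ (e' : (Fin n → ℤ) →ₗ[ℤ] N))).natAbs :=
        hdet2.symm
    _ = (LinearMap.det (((N.subtype).restrictScalars ℤ) ∘ₗ (e : (Fin n → ℤ) →ₗ[ℤ] N))).natAbs :=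
        (Int.natAbs_eq_iff_associated.mpr hassoc).symm
    _ = A.det.natAbs := by rw [hdet1]


lemma exists_short_rep {k : ℕ} {G : Type*} [AddCommGroup G] [Finite G]
    (φ : (Fin k → ℤ) →+ G) (d : ℕ) (hcard : Nat.card G ≤ d) (s0 : Fin k → ℤ) :
    ∃ δ : Fin k → ℤ, φ δ = φ s0 ∧ ∑ i, (δ i).natAbs ≤ d - 1 := by
  classical
  set S : ℕ → Set G := fun r => φ '' {δ | ∑ i, (δ i).natAbs ≤ r} with hS
  have hmono : ∀ r, S r ⊆ S (r + 1) := by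
    intro r x hx
    obtain ⟨δ, hδ, rfl⟩ := hx
    exact ⟨δ, le_trans hδ (Nat.le_succ r), rfl⟩
  -- stability
  have hstab : ∀ r, S (r + 1) ⊆ S r → ∀ δ : Fin k → ℤ, φ δ ∈ S r := by
    intro r hsub δ
    have key : ∀ t : ℕ, ∀ δ : Fin k → ℤ, ∑ i, (δ i).natAbs ≤ t → φ δ ∈ S r := by
      intro t
      induction t with
      | zero =>
        intro δ hδ
        exact ⟨δ, le_trans hδ (Nat.zero_le r), rfl⟩
      | succ t ih =>
        intro δ hδ
        by_cases hle : ∑ i, (δ i).natAbs ≤ r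
        · exact ⟨δ, hle, rfl⟩
        · have hpos : 0 < ∑ i, (δ i).natAbs := by omega
          have : ∃ j, δ j ≠ 0 := by
            by_contra hc
            push_neg at hc
            simp [hc] at hpos
          obtain ⟨j, hj⟩ := this
          set s : ℤ := Int.sign (δ j) with hs
          set δ' : Fin k → ℤ := Function.update δ j (δ j - s) with hδ'
          have habs : (δ j - s).natAbs = (δ j).natAbs - 1 := by
            rcases lt_trichotomy (δ j) 0 with hlt | heq | hgt
            · rw [hs, Int.sign_eq_neg_one_of_neg hlt]; omega
            · exact absurd heq hj
            · rw [hs, Int.sign_eq_one_of_pos hgt]; omega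
          have hsum' : ∑ i, (δ' i).natAbs ≤ t := by
            have h1 : ∑ i, (δ' i).natAbs
                = (δ j - s).natAbs + ∑ i ∈ Finset.univ.erase j, (δ i).natAbs := by
              rw [hδ']
              rw [← Finset.add_sum_erase _ _ (Finset.mem_univ j)]
              congr 1
              · simp [Function.update_self]
              · exact Finset.sum_congr rfl fun i hi =>
                  by rw [Function.update_of_ne (Finset.ne_of_mem_erase hi)]
            have h2 : ∑ i, (δ i).natAbs
                = (δ j).natAbs + ∑ i ∈ Finset.univ.erase j, (δ i).natAbs :=
              (Finset.add_sum_erase _ _ (Finset.mem_univ j)).symm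
            have h3 : 1 ≤ (δ j).natAbs := by
              rcases Int.natAbs_eq_zero.not.mpr hj with h
              omega
            omega
          obtain ⟨ε, hε, hφε⟩ := ih δ' hsum'
          have hε2 : ∑ i, (ε i).natAbs ≤ r := hε
          set ε' : Fin k → ℤ := ε + Pi.single j s with hε'
          have hφeq : φ ε' = φ δ := by
            have hδeq : δ' + Pi.single j s = δ := by
              funext i
              by_cases hij : i = j
              · subst hij; simp [hδ', Function.update_self]
              · simp [hδ', Function.update_of_ne hij, Pi.single_eq_of_ne hij]
            rw [hε', map_add, hφε, ← map_add, hδeq]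
          have hsumε' : ∑ i, (ε' i).natAbs ≤ r + 1 := by
            have h1 : ∀ i, (ε' i).natAbs ≤ (ε i).natAbs + ((Pi.single j s : Fin k → ℤ) i).natAbs := by
              intro i
              rw [hε']
              exact Int.natAbs_add_le _ _
            have h2 : ∑ i, ((Pi.single j s : Fin k → ℤ) i).natAbs = s.natAbs := by
              rw [← Finset.add_sum_erase _ _ (Finset.mem_univ j)]
              have : ∀ i ∈ Finset.univ.erase j, ((Pi.single j s : Fin k → ℤ) i).natAbs = 0 := by
                intro i hi
                rw [Pi.single_eq_of_ne (Finset.ne_of_mem_erase hi)]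
                rfl
              rw [Finset.sum_eq_zero this]
              simp
            have h3 : s.natAbs = 1 := by
              rw [hs]
              rcases lt_trichotomy (δ j) 0 with hlt | heq | hgt
              · rw [Int.sign_eq_neg_one_of_neg hlt]; rfl
              · exact absurd heq hj
              · rw [Int.sign_eq_one_of_pos hgt]; rfl
            calc ∑ i, (ε' i).natAbs
                ≤ ∑ i, ((ε i).natAbs + ((Pi.single j s : Fin k → ℤ) i).natAbs) :=
                  Finset.sum_le_sum fun i _ => h1 i
              _ = (∑ i, (ε i).natAbs) + ∑ i, ((Pi.single j s : Fin k → ℤ) i).natAbs :=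
                  Finset.sum_add_distrib
              _ ≤ r + 1 := by rw [h2, h3]; omega
          exact hsub ⟨ε', hsumε', hφeq⟩
    exact key (∑ i, (δ i).natAbs) δ le_rfl
  -- growth
  have hgrow : ∀ r : ℕ, (∀ δ : Fin k → ℤ, φ δ ∈ S r) ∨ r + 1 ≤ (S r).ncard := by
    intro r
    induction r with
    | zero =>
      right
      have h0 : φ 0 ∈ S 0 := ⟨0, by simp, rfl⟩
      have : (S 0).Nonempty := ⟨φ 0, h0⟩
      have := Set.ncard_pos (Set.toFinite _) |>.mpr this
      omega
    | succ r ih =>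
      rcases ih with hall | hcard'
      · left
        intro δ
        exact hmono r (hall δ)
      · by_cases hsub : S (r + 1) ⊆ S r
        · left
          intro δ
          exact hmono r (hstab r hsub δ)
        · right
          have hssub : S r ⊂ S (r + 1) := ⟨hmono r, fun h => hsub h⟩
          have := Set.ncard_lt_ncard hssub (Set.toFinite _)
          omega
  rcases hgrow (d - 1) with hall | hbig
  · obtain ⟨δ, hδ, hφδ⟩ := hall s0
    exact ⟨δ, hφδ, hδ⟩
  · have huniv : S (d - 1) = Set.univ := by
      apply Set.eq_of_subset_of_ncard_le (Set.subset_univ _)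
      rw [Set.ncard_univ]
      have hd1 : 1 ≤ Nat.card G := Nat.card_pos
      omega
    have : φ s0 ∈ S (d - 1) := by rw [huniv]; trivial
    obtain ⟨δ, hδ, hφδ⟩ := this
    exact ⟨δ, hφδ, hδ⟩


open Matrix

section Key
variable {m n : ℕ}

-- helper: mulVec of an "extended" vector supported on range g₀
lemma mulVec_extend (U : Matrix (Fin m) (Fin n) ℤ) (g₀ : Fin m → Fin n)
    (hg : Function.Injective g₀) (x : Fin m → ℤ) :
    U *ᵥ (Function.extend g₀ x 0) = (U.submatrix id g₀) *ᵥ x := by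
  classical
  funext i
  simp only [Matrix.mulVec, dotProduct, Matrix.submatrix_apply, id]
  rw [← Finset.sum_subset (Finset.subset_univ (Finset.univ.image g₀))
      (fun j _ hj => by
        have hne : ¬ ∃ i', g₀ i' = j := by
          intro ⟨i', hi'⟩
          exact hj (Finset.mem_image.mpr ⟨i', Finset.mem_univ _, hi'⟩)
        rw [Function.extend_apply' _ _ _ hne]
        simp)]
  rw [Finset.sum_image (fun a _ c _ h => hg h)]
  exact Finset.sum_congr rfl fun i' _ => by rw [hg.extend_apply]

lemma mulVec_eq_sum_cols (U : Matrix (Fin m) (Fin n) ℤ) (v : Fin n → ℤ) :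
    U *ᵥ v = ∑ j, v j • (fun i => U i j) := by
  funext i
  simp [Matrix.mulVec, dotProduct, Finset.sum_apply, mul_comm]

lemma key_lemma (U : Matrix (Fin m) (Fin n) ℤ) (b : Fin m → ℤ) (M : ℤ)
    (hminor : ∀ g : Fin m → Fin n, |(U.submatrix id g).det| ≤ M)
    (hminorb : ∀ (g : Fin m → Fin n) (i : Fin m),
      |((U.submatrix id g).updateCol i b).det| ≤ M)
    (hrank : ∃ g : Fin m → Fin n, (U.submatrix id g).det ≠ 0)
    (hsol : ∃ y, U *ᵥ y = b) :
    ∃ y, U *ᵥ y = b ∧ ∀ j, |y j| ≤ M := by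
  classical
  obtain ⟨y, hy⟩ := hsol
  obtain ⟨gex, hgex⟩ := hrank
  -- maximize |det| over all g
  obtain ⟨g₀, -, hmax⟩ := Finset.exists_max_image (Finset.univ : Finset (Fin m → Fin n))
    (fun g => ((U.submatrix id g).det).natAbs) ⟨gex, Finset.mem_univ _⟩
  have hmax' : ∀ g : Fin m → Fin n, ((U.submatrix id g).det).natAbs
      ≤ ((U.submatrix id g₀).det).natAbs := fun g => hmax g (Finset.mem_univ g)
  set A : Matrix (Fin m) (Fin m) ℤ := U.submatrix id g₀ with hA
  set D : ℤ := A.det with hD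
  have hDne : D ≠ 0 := by
    intro h0
    have h5 := hmax' gex
    rw [h0] at h5
    simp at h5
    exact hgex h5
  have hg₀inj : Function.Injective g₀ := by
    intro i1 i2 h12
    by_contra hne
    apply hDne
    apply Matrix.det_zero_of_column_eq hne
    intro r
    simp [hA, Matrix.submatrix_apply, h12]
  set dN : ℕ := D.natAbs with hdN
  have hd1 : 1 ≤ dN := by
    have := Int.natAbs_pos.mpr hDne; omega
  -- the quotient group
  set N := LinearMap.range A.mulVecLin with hN
  set H := N.toAddSubgroup with hH
  have hindex : H.index = dN := index_range_mulVecLin A hDne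
  have hcardQ : Nat.card ((Fin m → ℤ) ⧸ H) = dN := hindex
  haveI : Finite ((Fin m → ℤ) ⧸ H) := Nat.finite_of_card_ne_zero (by omega)
  set φ : (Fin n → ℤ) →+ ((Fin m → ℤ) ⧸ H) :=
    (QuotientAddGroup.mk' H).comp (U.mulVecLin.toAddMonoidHom) with hφ
  obtain ⟨δ, hφδ, hδsum⟩ := exists_short_rep φ dN (le_of_eq hcardQ) y
  -- zero out the coordinates in range g₀
  set δ' : Fin n → ℤ := fun j => if j ∈ Set.range g₀ then 0 else δ j with hδ'
  have hδ'abs : ∀ j, |δ' j| ≤ |δ j| := by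
    intro j
    by_cases hj : j ∈ Set.range g₀
    · have h6 : δ' j = 0 := by simp only [hδ']; exact if_pos hj
      rw [h6]
      simpa using abs_nonneg (δ j)
    · have h6 : δ' j = δ j := by simp only [hδ']; exact if_neg hj
      rw [h6]
  have hδ'sum : ∑ j, |δ' j| ≤ (dN : ℤ) - 1 := by
    calc ∑ j, |δ' j| ≤ ∑ j, |δ j| := Finset.sum_le_sum fun j _ => hδ'abs j
      _ = ((∑ j, (δ j).natAbs : ℕ) : ℤ) := by
          push_cast
          rfl
      _ ≤ ((dN - 1 : ℕ) : ℤ) := by exact_mod_cast hδsum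
      _ ≤ (dN : ℤ) - 1 := by
          have : ((dN - 1 : ℕ) : ℤ) = (dN : ℤ) - 1 := by omega
          omega
  -- φ δ' = φ δ
  have hdiff : δ - δ' = Function.extend g₀ (fun i => δ (g₀ i)) 0 := by
    funext j
    by_cases hj : j ∈ Set.range g₀
    · obtain ⟨i, rfl⟩ := hj
      rw [hg₀inj.extend_apply]
      have h6 : δ' (g₀ i) = 0 := by simp only [hδ']; exact if_pos ⟨i, rfl⟩
      simp [h6]
    · have hne : ¬ ∃ i', g₀ i' = j := by
        intro ⟨i', hi'⟩; exact hj ⟨i', hi'⟩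
      rw [Function.extend_apply' _ _ _ hne]
      have h6 : δ' j = δ j := by simp only [hδ']; exact if_neg hj
      simp [h6]
  have hφδ' : φ δ' = φ δ := by
    have hmem : U *ᵥ (δ - δ') ∈ H := by
      rw [hdiff, mulVec_extend U g₀ hg₀inj]
      exact ⟨fun i => δ (g₀ i), rfl⟩
    have : φ (δ - δ') = 0 := by
      rw [hφ]
      simp only [AddMonoidHom.comp_apply, LinearMap.toAddMonoidHom_coe]
      rw [QuotientAddGroup.mk'_apply]
      rw [QuotientAddGroup.eq_zero_iff]
      exact hmem
    have h4 : φ δ - φ δ' = 0 := by rw [← map_sub]; exact this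
    exact (sub_eq_zero.mp h4).symm
  -- get x with A x = b - U δ'
  have hsolx : ∃ x : Fin m → ℤ, A *ᵥ x = b - U *ᵥ δ' := by
    have : φ δ' = φ y := by rw [hφδ', hφδ]
    have hmem : (U *ᵥ y) - (U *ᵥ δ') ∈ H := by
      have h2 : φ (y - δ') = 0 := by
        rw [map_sub, ← this, sub_self]
      rw [hφ] at h2
      simp only [AddMonoidHom.comp_apply, LinearMap.toAddMonoidHom_coe] at h2
      rw [QuotientAddGroup.mk'_apply, QuotientAddGroup.eq_zero_iff] at h2
      rwa [map_sub, Matrix.mulVecLin_apply, Matrix.mulVecLin_apply] at h2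
    obtain ⟨x, hx⟩ := hmem
    refine ⟨x, ?_⟩
    rw [← hy]
    rw [← Matrix.mulVecLin_apply]
    exact hx
  obtain ⟨x, hx⟩ := hsolx
  set y' : Fin n → ℤ := δ' + Function.extend g₀ x 0 with hy'
  have hsolve : U *ᵥ y' = b := by
    rw [hy', Matrix.mulVec_add, mulVec_extend U g₀ hg₀inj, hx]
    ring_nf
  refine ⟨y', hsolve, ?_⟩
  have hdM : (dN : ℤ) ≤ M := by
    have h7 := hminor g₀
    calc (dN : ℤ) = |D| := (Int.abs_eq_natAbs D).symm
      _ ≤ M := h7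
  -- bound x
  have hxbound : ∀ i, |x i| ≤ M := by
    intro i
    have hcram : D * x i = A.cramer (b - U *ᵥ δ') i := by
      have h1 : A.adjugate *ᵥ (A *ᵥ x) = D • x := by
        rw [Matrix.mulVec_mulVec, Matrix.adjugate_mul, Matrix.smul_mulVec,
          Matrix.one_mulVec]
      rw [hx] at h1
      rw [Matrix.cramer_eq_adjugate_mulVec]
      have h2 := congrFun h1 i
      simpa [Pi.smul_apply, smul_eq_mul] using h2.symm
    have hsplit : A.cramer (b - U *ᵥ δ') i
        = A.cramer b i - ∑ j, δ' j * A.cramer (fun r => U r j) i := by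
      rw [map_sub, Pi.sub_apply]
      congr 1
      rw [mulVec_eq_sum_cols U δ', map_sum, Finset.sum_apply]
      refine Finset.sum_congr rfl fun j _ => ?_
      rw [_root_.map_smul]
      simp [smul_eq_mul]
    have hcrb : |A.cramer b i| ≤ M := by
      rw [Matrix.cramer_apply]
      exact hminorb g₀ i
    have hcrcol : ∀ j, |A.cramer (fun r => U r j) i| ≤ |D| := by
      intro j
      rw [Matrix.cramer_apply]
      have heq : A.updateCol i (fun r => U r j)
          = U.submatrix id (Function.update g₀ i j) := by
        ext r c
        rw [Matrix.updateCol_apply, Matrix.submatrix_apply, id]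
        by_cases hc : c = i
        · subst hc; simp [Function.update_self]
        · simp [hc, hA, Function.update_of_ne hc]
      rw [heq]
      calc |(U.submatrix id (Function.update g₀ i j)).det|
          = (((U.submatrix id (Function.update g₀ i j)).det).natAbs : ℤ) :=
            Int.abs_eq_natAbs _
        _ ≤ (D.natAbs : ℤ) := by exact_mod_cast hmax' _
        _ = |D| := (Int.abs_eq_natAbs D).symm
    have habs : |D * x i| ≤ M + ((dN : ℤ) - 1) * |D| := by
      rw [hcram, hsplit]
      calc |A.cramer b i - ∑ j, δ' j * A.cramer (fun r => U r j) i|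
          ≤ |A.cramer b i| + |∑ j, δ' j * A.cramer (fun r => U r j) i| := abs_sub _ _
        _ ≤ M + ((dN : ℤ) - 1) * |D| := by
            gcongr
            calc |∑ j, δ' j * A.cramer (fun r => U r j) i|
                ≤ ∑ j, |δ' j * A.cramer (fun r => U r j) i| :=
                  Finset.abs_sum_le_sum_abs _ _
              _ ≤ ∑ j, |δ' j| * |D| := by
                  refine Finset.sum_le_sum fun j _ => ?_
                  rw [abs_mul]
                  exact mul_le_mul_of_nonneg_left (hcrcol j) (abs_nonneg _)
              _ = (∑ j, |δ' j|) * |D| := by rw [Finset.sum_mul]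
              _ ≤ ((dN : ℤ) - 1) * |D| :=
                  mul_le_mul_of_nonneg_right hδ'sum (abs_nonneg _)
    have hDabs : |D| = (dN : ℤ) := Int.abs_eq_natAbs D
    have hfinal : (dN : ℤ) * |x i| ≤ (dN : ℤ) * M := by
      have h1 : |D * x i| = |D| * |x i| := abs_mul _ _
      rw [h1, hDabs] at habs
      have h2 : M + ((dN : ℤ) - 1) * (dN : ℤ) ≤ (dN : ℤ) * M := by nlinarith [hd1, hdM]
      calc (dN : ℤ) * |x i| ≤ M + ((dN : ℤ) - 1) * (dN : ℤ) := by linarith [habs]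
        _ ≤ (dN : ℤ) * M := h2
    have hdpos : (0 : ℤ) < dN := by exact_mod_cast hd1
    exact le_of_mul_le_mul_left hfinal hdpos
  intro j
  by_cases hj : j ∈ Set.range g₀
  · obtain ⟨i, rfl⟩ := hj
    have h1 : y' (g₀ i) = x i := by
      rw [hy']
      simp only [Pi.add_apply]
      rw [hg₀inj.extend_apply]
      have h6 : δ' (g₀ i) = 0 := by simp only [hδ']; exact if_pos ⟨i, rfl⟩
      rw [h6, zero_add]
    rw [h1]
    exact hxbound i
  · have hne : ¬ ∃ i', g₀ i' = j := fun ⟨i', hi'⟩ => hj ⟨i', hi'⟩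
    have h1 : y' j = δ j := by
      rw [hy']
      simp only [Pi.add_apply]
      rw [Function.extend_apply' _ _ _ hne]
      have h6 : δ' j = δ j := by simp only [hδ']; exact if_neg hj
      rw [h6]
      simp
    rw [h1]
    have : |δ j| ≤ ∑ j', |δ j'| := Finset.single_le_sum (f := fun j' => |δ j'|)
      (fun j' _ => abs_nonneg _) (Finset.mem_univ j)
    have h2 : ∑ j', |δ j'| ≤ (dN : ℤ) - 1 := by
      calc ∑ j', |δ j'| = ((∑ j', (δ j').natAbs : ℕ) : ℤ) := by
            push_cast
            rfl
        _ ≤ ((dN - 1 : ℕ) : ℤ) := by exact_mod_cast hδsum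
        _ ≤ (dN : ℤ) - 1 := by omega
    linarith [hdM]



lemma mulVec_eq_sum_cols' {α : Type*} [CommRing α] {m n : ℕ}
    (U : Matrix (Fin m) (Fin n) α) (v : Fin n → α) :
    U *ᵥ v = ∑ j, v j • (fun i => U i j) := by
  funext i
  simp [Matrix.mulVec, dotProduct, Finset.sum_apply, mul_comm]

lemma rows_dependent {m n : ℕ} (U : Matrix (Fin (m+1)) (Fin n) ℤ)
    (hall : ∀ g : Fin (m+1) → Fin n, (U.submatrix id g).det = 0) :
    ∃ c : Fin (m+1) → ℚ, (∃ k, c k ≠ 0) ∧ ∀ j, (∑ i, c i * (U i j : ℚ)) = 0 := by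
  classical
  set V : Matrix (Fin (m+1)) (Fin n) ℚ := U.map (Int.cast) with hV
  by_cases hLI : LinearIndependent ℚ (fun i => V i)
  · exfalso
    -- rank arguments
    have hrankT : Vᵀ.rank = m + 1 := by
      rw [Matrix.rank_eq_finrank_span_cols]
      have : (Vᵀ)ᵀ = V := Matrix.transpose_transpose V
      rw [show Vᵀ.col = V from rfl]
      rw [finrank_span_eq_card hLI]
      simp
    have hrank : V.rank = m + 1 := by rw [← Matrix.rank_transpose]; exact hrankT
    have hspan : Submodule.span ℚ (Set.range Vᵀ) = ⊤ := by
      apply Submodule.eq_top_of_finrank_eq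
      rw [show Set.range Vᵀ = Set.range V.col from rfl]
      rw [← Matrix.rank_eq_finrank_span_cols V] at *
      rw [hrank]
      simp [Module.finrank_pi]
    obtain ⟨s, hsub, hspan2, hLIs⟩ := exists_linearIndependent ℚ (Set.range Vᵀ)
    rw [hspan] at hspan2
    have hsfin : s.Finite := hLIs.setFinite
    haveI := hsfin.fintype
    have hcard : s.toFinset.card = m + 1 := by
      have := finrank_span_set_eq_card hLIs
      rw [hspan2] at this
      rw [← this]
      simp [Module.finrank_pi]
    have hcard2 : Fintype.card s = m + 1 := by
      rw [← Set.toFinset_card]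
      exact hcard
    set e : Fin (m+1) ≃ ↥s := (Fintype.equivFinOfCardEq hcard2).symm with he
    have hchoice : ∀ i : Fin (m+1), ∃ j : Fin n, Vᵀ j = (e i : Fin (m+1) → ℚ) :=
      fun i => hsub (e i).2
    set g : Fin (m+1) → Fin n := fun i => (hchoice i).choose with hg
    have hgspec : ∀ i, Vᵀ (g i) = (e i : Fin (m+1) → ℚ) := fun i => (hchoice i).choose_spec
    -- columns of V.submatrix id g are linearly independent
    have hcolLI : LinearIndependent ℚ (fun i : Fin (m+1) => Vᵀ (g i)) := by
      have h1 : (fun i : Fin (m+1) => Vᵀ (g i)) = (Subtype.val : s → _) ∘ e := by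
        funext i
        rw [hgspec i]
        rfl
      rw [h1]
      exact hLIs.comp e e.injective
    -- but its det vanishes
    have hdet0 : (V.submatrix id g).det = 0 := by
      have : V.submatrix id g = (U.submatrix id g).map (Int.cast) := by
        ext i j
        simp [hV]
      rw [this]
      rw [show ((U.submatrix id g).map (Int.cast : ℤ → ℚ))
          = (Int.castRingHom ℚ).mapMatrix (U.submatrix id g) from rfl]
      rw [← RingHom.map_det, hall g]
      simp
    obtain ⟨v, hvne, hv0⟩ := Matrix.exists_mulVec_eq_zero_iff.mpr hdet0
    have hcomb : ∑ j, v j • (fun i => (V.submatrix id g) i j) = 0 := by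
      rw [← mulVec_eq_sum_cols']
      exact hv0
    have : v = 0 := by
      have := Fintype.linearIndependent_iff.mp hcolLI v ?_
      · funext j; exact this j
      · rw [← hcomb]
        apply Finset.sum_congr rfl
        intro j _
        congr 1
    exact hvne this
  · obtain ⟨c, hc0, k, hck⟩ := Fintype.not_linearIndependent_iff.mp hLI
    refine ⟨c, ⟨k, hck⟩, ?_⟩
    intro j
    have := congrFun hc0 j
    simpa [hV, Finset.sum_apply] using this



lemma main_bound : ∀ (m n : ℕ) (U : Matrix (Fin m) (Fin n) ℤ) (b : Fin m → ℤ) (B : ℝ),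
    1 ≤ B → (∀ i j, |((U i j : ℤ) : ℝ)| ≤ B) → (∀ i, |((b i : ℤ) : ℝ)| ≤ B) →
    (∃ y, U *ᵥ y = b) →
    ∃ y, U *ᵥ y = b ∧ ∀ j, |((y j : ℤ) : ℝ)| ≤ (Real.sqrt m * B) ^ m := by
  intro m
  induction m using Nat.strong_induction_on with
  | _ m ih =>
  match m with
  | 0 =>
    intro n U b B hB hU hb hsol
    refine ⟨0, ?_, fun j => by simp⟩
    have : Subsingleton (Fin 0 → ℤ) := ⟨fun a b => funext fun i => i.elim0⟩
    exact Subsingleton.elim _ _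
  | (m' + 1) =>
    intro n U b B hB hU hb hsol
    have hBpos : (0:ℝ) ≤ B := le_trans zero_le_one hB
    by_cases hrank : ∃ g : Fin (m'+1) → Fin n, (U.submatrix id g).det ≠ 0
    · set Mreal : ℝ := (Real.sqrt ((m'+1 : ℕ) : ℝ) * B) ^ (m'+1) with hMreal
      set MZ : ℤ := ⌊Mreal⌋ with hMZ
      have hminor : ∀ g : Fin (m'+1) → Fin n, |(U.submatrix id g).det| ≤ MZ := by
        intro g
        rw [hMZ, Int.le_floor]
        have h1 := hadamard_int (U.submatrix id g) B hBpos
          (fun i j => hU i (g j))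
        calc ((|(U.submatrix id g).det| : ℤ) : ℝ) = |(((U.submatrix id g).det : ℤ) : ℝ)| := by
              push_cast; rfl
          _ ≤ Mreal := h1
      have hminorb : ∀ (g : Fin (m'+1) → Fin n) (i : Fin (m'+1)),
          |((U.submatrix id g).updateCol i b).det| ≤ MZ := by
        intro g i
        rw [hMZ, Int.le_floor]
        have hentry : ∀ r c, |((((U.submatrix id g).updateCol i b) r c : ℤ) : ℝ)| ≤ B := by
          intro r c
          rw [Matrix.updateCol_apply]
          by_cases hc : c = i
          · rw [if_pos hc]; exact hb r
          · rw [if_neg hc]; exact hU r (g c)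
        have h1 := hadamard_int ((U.submatrix id g).updateCol i b) B hBpos hentry
        calc ((|((U.submatrix id g).updateCol i b).det| : ℤ) : ℝ)
            = |((((U.submatrix id g).updateCol i b).det : ℤ) : ℝ)| := by push_cast; rfl
          _ ≤ Mreal := h1
      obtain ⟨y, hy, hbound⟩ := key_lemma U b MZ hminor hminorb hrank hsol
      refine ⟨y, hy, fun j => ?_⟩
      calc |((y j : ℤ) : ℝ)| = ((|y j| : ℤ) : ℝ) := by push_cast; rfl
        _ ≤ ((MZ : ℤ) : ℝ) := by exact_mod_cast hbound j
        _ ≤ Mreal := Int.floor_le Mreal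
    · push_neg at hrank
      have hall : ∀ g : Fin (m'+1) → Fin n, (U.submatrix id g).det = 0 := hrank
      obtain ⟨c, ⟨k, hck⟩, hcrel⟩ := rows_dependent U hall
      set U' : Matrix (Fin m') (Fin n) ℤ := U.submatrix (Fin.succAbove k) id with hU'
      set b' : Fin m' → ℤ := fun i => b (k.succAbove i) with hb'
      have hsol' : ∃ y, U' *ᵥ y = b' := by
        obtain ⟨y0, hy0⟩ := hsol
        exact ⟨y0, funext fun i => congrFun hy0 (k.succAbove i)⟩
      obtain ⟨y, hy', hbound⟩ := ih m' (Nat.lt_succ_self m') n U' b' B hB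
        (fun i j => hU (k.succAbove i) j) (fun i => hb (k.succAbove i)) hsol'
      have hrow : ∀ i, i ≠ k → (U *ᵥ y) i = b i := by
        intro i hik
        obtain ⟨i', hi'⟩ := Fin.exists_succAbove_eq hik
        rw [← hi']
        exact congrFun hy' i'
      have hFzero : ∀ z : Fin n → ℤ, (∑ i, c i * (((U *ᵥ z) i : ℤ) : ℚ)) = 0 := by
        intro z
        have hexp : ∀ i, (((U *ᵥ z) i : ℤ) : ℚ) = ∑ j, (U i j : ℚ) * (z j : ℚ) := by
          intro i
          simp only [Matrix.mulVec, dotProduct]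
          push_cast
          rfl
        calc ∑ i, c i * (((U *ᵥ z) i : ℤ) : ℚ)
            = ∑ i, ∑ j, c i * ((U i j : ℚ) * (z j : ℚ)) := by
              refine Finset.sum_congr rfl fun i _ => ?_
              rw [hexp i, Finset.mul_sum]
          _ = ∑ j, ∑ i, c i * ((U i j : ℚ) * (z j : ℚ)) := Finset.sum_comm
          _ = ∑ j, (∑ i, c i * (U i j : ℚ)) * (z j : ℚ) := by
              refine Finset.sum_congr rfl fun j _ => ?_
              rw [Finset.sum_mul]
              refine Finset.sum_congr rfl fun i _ => ?_
              ring
          _ = 0 := by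
              apply Finset.sum_eq_zero
              intro j _
              rw [hcrel j, zero_mul]
      obtain ⟨y0, hy0⟩ := hsol
      have hk : (U *ᵥ y) k = b k := by
        have h1 := hFzero y
        have h2 := hFzero y0
        rw [hy0] at h2
        rw [← Finset.add_sum_erase _ _ (Finset.mem_univ k)] at h1 h2
        have e1 : ∑ i ∈ Finset.univ.erase k, c i * (((U *ᵥ y) i : ℤ) : ℚ)
            = ∑ i ∈ Finset.univ.erase k, c i * ((b i : ℤ) : ℚ) := by
          refine Finset.sum_congr rfl fun i hi => ?_
          rw [hrow i (Finset.ne_of_mem_erase hi)]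
        rw [e1] at h1
        have h3 : c k * (((U *ᵥ y) k : ℤ) : ℚ) = c k * ((b k : ℤ) : ℚ) := by linarith
        have h4 := mul_left_cancel₀ hck h3
        exact_mod_cast h4
      have hfull : U *ᵥ y = b := by
        funext i
        by_cases hik : i = k
        · subst hik; exact hk
        · exact hrow i hik
      refine ⟨y, hfull, fun j => ?_⟩
      have hsqrt1 : (1:ℝ) ≤ Real.sqrt ((m'+1 : ℕ) : ℝ) * B := by
        have h5 : (1:ℝ) ≤ Real.sqrt ((m'+1 : ℕ) : ℝ) := by
          rw [show (1:ℝ) = Real.sqrt 1 from (Real.sqrt_one).symm]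
          apply Real.sqrt_le_sqrt
          push_cast
          linarith
        nlinarith
      calc |((y j : ℤ) : ℝ)| ≤ (Real.sqrt (m' : ℝ) * B) ^ m' := hbound j
        _ ≤ (Real.sqrt ((m'+1 : ℕ) : ℝ) * B) ^ m' := by
            apply pow_le_pow_left₀ (by positivity)
            apply mul_le_mul_of_nonneg_right _ hBpos
            apply Real.sqrt_le_sqrt
            push_cast
            linarith
        _ ≤ (Real.sqrt ((m'+1 : ℕ) : ℝ) * B) ^ (m'+1) :=
            pow_le_pow_right₀ hsqrt1 (Nat.le_succ m')


theorem stmt_12 (m n : ℕ) (U : Matrix (Fin m) (Fin n) ℤ) (b : Fin m → ℤ)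
    (h : ℝ) (hh : 0 ≤ h)
    (hU : ∀ i j, U i j ≠ 0 → Real.log |(U i j : ℝ)| ≤ h)
    (hb : ∀ i, b i ≠ 0 → Real.log |(b i : ℝ)| ≤ h)
    (hsol : ∃ y : Fin n → ℤ, U.mulVec y = b) :
    ∃ y : Fin n → ℤ, U.mulVec y = b ∧
      ∀ i, Real.log |(y i : ℝ)| ≤ m * h + (1 / 2) * m * Real.log m := by
  have hB : (1:ℝ) ≤ Real.exp h := by
    rw [← Real.exp_zero]
    exact Real.exp_le_exp.mpr hh
  have hUb : ∀ i j, |((U i j : ℤ) : ℝ)| ≤ Real.exp h := by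
    intro i j
    by_cases h0 : U i j = 0
    · rw [h0]
      simpa using (Real.exp_pos h).le
    · have hpos : 0 < |((U i j : ℤ) : ℝ)| := abs_pos.mpr (by exact_mod_cast h0)
      calc |((U i j : ℤ) : ℝ)| = Real.exp (Real.log |((U i j : ℤ) : ℝ)|) :=
            (Real.exp_log hpos).symm
        _ ≤ Real.exp h := Real.exp_le_exp.mpr (hU i j h0)
  have hbb : ∀ i, |((b i : ℤ) : ℝ)| ≤ Real.exp h := by
    intro i
    by_cases h0 : b i = 0
    · rw [h0]
      simpa using (Real.exp_pos h).le
    · have hpos : 0 < |((b i : ℤ) : ℝ)| := abs_pos.mpr (by exact_mod_cast h0)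
      calc |((b i : ℤ) : ℝ)| = Real.exp (Real.log |((b i : ℤ) : ℝ)|) :=
            (Real.exp_log hpos).symm
        _ ≤ Real.exp h := Real.exp_le_exp.mpr (hb i h0)
  obtain ⟨y, hy, hbound⟩ := main_bound m n U b (Real.exp h) hB hUb hbb hsol
  refine ⟨y, hy, fun i => ?_⟩
  rcases Nat.eq_zero_or_pos m with hm | hm
  · subst hm
    have h1 : |((y i : ℤ) : ℝ)| ≤ 1 := by simpa using hbound i
    have h2 : Real.log |((y i : ℤ) : ℝ)| ≤ 0 := Real.log_nonpos (abs_nonneg _) h1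
    simpa using h2
  · have hmpos : (0:ℝ) < (m : ℝ) := by exact_mod_cast hm
    have hm1 : (1:ℝ) ≤ (m : ℝ) := by exact_mod_cast hm
    have hRHS : Real.log ((Real.sqrt (m : ℝ) * Real.exp h) ^ m)
        = m * h + (1/2) * m * Real.log m := by
      rw [Real.log_pow, Real.log_mul (ne_of_gt (Real.sqrt_pos.mpr hmpos))
        (ne_of_gt (Real.exp_pos h)), Real.log_sqrt (le_of_lt hmpos), Real.log_exp]
      ring
    by_cases h0 : y i = 0
    · rw [h0]
      have hlog : Real.log (m : ℝ) ≥ 0 := Real.log_nonneg hm1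
      have h3 : (0:ℝ) ≤ (m : ℝ) * h := mul_nonneg (le_of_lt hmpos) hh
      have h4 : (0:ℝ) ≤ (1/2) * (m : ℝ) * Real.log m := by
        apply mul_nonneg
        · apply mul_nonneg
          · norm_num
          · exact le_of_lt hmpos
        · exact hlog
      simpa using by linarith
    · have hpos : 0 < |((y i : ℤ) : ℝ)| := abs_pos.mpr (by exact_mod_cast h0)
      calc Real.log |((y i : ℤ) : ℝ)|
          ≤ Real.log ((Real.sqrt (m : ℝ) * Real.exp h) ^ m) :=
            Real.log_le_log hpos (hbound i)
        _ = m * h + (1/2) * m * Real.log m := hRHS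
end Key
end

section
/- Let f be a complex polynomial of degree n ≥ 2 with leading coefficient a_n and roots α₁,…,α_n. Then for every z ∈ ℂ, |f(z)| ≥ (|D(f)|^{1/2} / (n^{(n-1)/2} · 2^{n-1} · M(f)^{n-2})) · min_i |z − α_i|, where D(f) is the discriminant of f and M(f) its Mahler measure. -/
open Finset

noncomputable def Complex.abs : AbsoluteValue ℂ ℝ := NormedField.toAbsoluteValue ℂ

lemma Complex.norm_eq_abs (z : ℂ) : ‖z‖ = Complex.abs z := rfl

lemma hadamard_ineq {m : ℕ} (A : Matrix (Fin m) (Fin m) ℂ) :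
    Complex.abs A.det ≤ ∏ i, Real.sqrt (∑ j, Complex.abs (A i j) ^ 2) := by
  classical
  have hdim : Module.finrank ℂ (EuclideanSpace ℂ (Fin m)) = Fintype.card (Fin m) := by simp
  set v : Fin m → EuclideanSpace ℂ (Fin m) := fun i => (WithLp.equiv 2 _).symm (A i) with hv
  set e : OrthonormalBasis (Fin m) ℂ (EuclideanSpace ℂ (Fin m)) := InnerProductSpace.gramSchmidtOrthonormalBasis hdim v with he
  set b₀ := EuclideanSpace.basisFun (Fin m) ℂ with hb₀
  have hnorm : ∀ i, ‖v i‖ = Real.sqrt (∑ j, Complex.abs (A i j) ^ 2) := by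
    intro i
    rw [EuclideanSpace.norm_eq]
    simp only [Complex.norm_eq_abs]
    rfl
  have hdetA : b₀.toBasis.det v = A.det := by
    have htm : b₀.toBasis.toMatrix v = A.transpose := by
      ext i j
      simp only [Module.Basis.toMatrix_apply, hv, b₀, Matrix.transpose_apply]
      rfl
    rw [Module.Basis.det_apply, htm, Matrix.det_transpose]
  have key : b₀.toBasis.det v = (b₀.toBasis.det e.toBasis) * (e.toBasis.det v) := by
    rw [Module.Basis.det_apply, Module.Basis.det_apply, Module.Basis.det_apply,
      ← Module.Basis.toMatrix_mul_toMatrix b₀.toBasis e.toBasis v, Matrix.det_mul]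
  have h1 : ‖b₀.toBasis.det e.toBasis‖ = 1 := b₀.det_to_matrix_orthonormalBasis e
  have h2 : e.toBasis.det v = ∏ i, inner ℂ (e i) (v i) :=
    InnerProductSpace.gramSchmidtOrthonormalBasis_det hdim v
  calc Complex.abs A.det = ‖b₀.toBasis.det v‖ := by rw [hdetA, Complex.norm_eq_abs]
    _ = ‖e.toBasis.det v‖ := by rw [key, norm_mul, h1, one_mul]
    _ = ∏ i, ‖(inner ℂ (e i) (v i) : ℂ)‖ := by rw [h2, norm_prod]
    _ ≤ ∏ i, ‖v i‖ := by
        apply Finset.prod_le_prod (fun i _ => norm_nonneg _)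
        intro i _
        calc ‖(inner ℂ (e i) (v i) : ℂ)‖ ≤ ‖e i‖ * ‖v i‖ := norm_inner_le_norm _ _
          _ = ‖v i‖ := by rw [e.orthonormal.1 i, one_mul]
    _ = ∏ i, Real.sqrt (∑ j, Complex.abs (A i j) ^ 2) := by
        exact Finset.prod_congr rfl fun i _ => hnorm i


lemma pair_prod_split {n m : ℕ} (g : Fin n → Fin n → ℝ)
    (hsym : ∀ i j, g i j = g j i) (i₀ : Fin n)
    (hcard : (univ.erase i₀).card = m) :
    ∏ i, ∏ j ∈ Ioi i, g i j =
      (∏ j ∈ univ.erase i₀, g i₀ j) *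
        ∏ k, ∏ l ∈ Ioi k, g ((univ.erase i₀).orderEmbOfFin hcard k)
          ((univ.erase i₀).orderEmbOfFin hcard l) := by
  classical
  set emb := (univ.erase i₀).orderEmbOfFin hcard with hemb
  rw [Finset.prod_sigma' univ (fun i => Ioi i) (fun i j => g i j),
      Finset.prod_sigma' univ (fun k => Ioi k) (fun k l => g (emb k) (emb l)),
      ← Finset.prod_filter_mul_prod_filter_not
        (univ.sigma fun i : Fin n => Ioi i) (fun x => x.1 = i₀ ∨ x.2 = i₀)]
  have hmem : ∀ x : Σ _ : Fin n, Fin n,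
      x ∈ (univ.sigma fun i : Fin n => Ioi i).filter (fun x => x.1 = i₀ ∨ x.2 = i₀) ↔
        x.1 < x.2 ∧ (x.1 = i₀ ∨ x.2 = i₀) := by
    intro x
    simp [Finset.mem_filter, Finset.mem_sigma, Finset.mem_Ioi]
  have hmem' : ∀ x : Σ _ : Fin n, Fin n,
      x ∈ (univ.sigma fun i : Fin n => Ioi i).filter (fun x => ¬(x.1 = i₀ ∨ x.2 = i₀)) ↔
        x.1 < x.2 ∧ x.1 ≠ i₀ ∧ x.2 ≠ i₀ := by
    intro x
    simp [Finset.mem_filter, Finset.mem_sigma, Finset.mem_Ioi, not_or]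
  congr 1
  · -- pairs involving i₀
    refine Finset.prod_bij' (fun (x : Σ _ : Fin n, Fin n) _ => if x.1 = i₀ then x.2 else x.1)
      (fun (j : Fin n) _ => if i₀ < j then ⟨i₀, j⟩ else ⟨j, i₀⟩) ?_ ?_ ?_ ?_ ?_
    · rintro ⟨x1, x2⟩ hx
      obtain ⟨hlt, hp⟩ := (hmem _).mp hx
      simp only at hlt hp ⊢
      by_cases h1 : x1 = i₀
      · rw [if_pos h1]
        exact Finset.mem_erase.mpr ⟨ne_of_gt (h1 ▸ hlt), Finset.mem_univ _⟩
      · rw [if_neg h1]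
        exact Finset.mem_erase.mpr ⟨h1, Finset.mem_univ _⟩
    · intro j hj
      obtain ⟨hne, -⟩ := Finset.mem_erase.mp hj
      rcases lt_or_gt_of_ne hne.symm with h | h
      · simp only [if_pos h]
        exact (hmem _).mpr ⟨h, Or.inl rfl⟩
      · simp only [if_neg (not_lt.mpr h.le)]
        exact (hmem _).mpr ⟨h, Or.inr rfl⟩
    · rintro ⟨x1, x2⟩ hx
      obtain ⟨hlt, hp⟩ := (hmem _).mp hx
      simp only at hlt hp
      beta_reduce
      by_cases h1 : x1 = i₀
      · rw [if_pos h1, if_pos (h1 ▸ hlt)]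
        simp only [Sigma.ext_iff, heq_eq_eq]
        exact ⟨h1.symm, trivial⟩
      · have h2 : x2 = i₀ := hp.resolve_left h1
        rw [if_neg h1, if_neg (not_lt.mpr (h2 ▸ hlt).le)]
        simp only [Sigma.ext_iff, heq_eq_eq]
        exact ⟨trivial, h2.symm⟩
    · intro j hj
      obtain ⟨hne, -⟩ := Finset.mem_erase.mp hj
      rcases lt_or_gt_of_ne hne.symm with h | h
      · beta_reduce
        rw [if_pos h]
        simp
      · beta_reduce
        rw [if_neg (not_lt.mpr h.le)]
        simp [hne]
    · rintro ⟨x1, x2⟩ hx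
      obtain ⟨hlt, hp⟩ := (hmem _).mp hx
      simp only at hlt hp
      beta_reduce
      by_cases h1 : x1 = i₀
      · rw [if_pos h1, h1]
      · have h2 : x2 = i₀ := hp.resolve_left h1
        rw [if_neg h1, h2]
        exact hsym x1 i₀
  · -- pairs not involving i₀
    symm
    refine Finset.prod_bij (fun (y : Σ _ : Fin m, Fin m) _ =>
        (⟨emb y.1, emb y.2⟩ : Σ _ : Fin n, Fin n)) ?_ ?_ ?_ ?_
    · rintro ⟨y1, y2⟩ hy
      have hy' : y1 < y2 := by simpa [Finset.mem_sigma, Finset.mem_Ioi] using hy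
      refine (hmem' _).mpr ⟨emb.strictMono hy', ?_, ?_⟩
      · exact (Finset.mem_erase.mp ((univ.erase i₀).orderEmbOfFin_mem hcard y1)).1
      · exact (Finset.mem_erase.mp ((univ.erase i₀).orderEmbOfFin_mem hcard y2)).1
    · intro y hy w hw heq
      obtain ⟨y1, y2⟩ := y
      obtain ⟨w1, w2⟩ := w
      simp only [Sigma.ext_iff, heq_eq_eq] at heq ⊢
      exact ⟨emb.injective heq.1, emb.injective heq.2⟩
    · intro x hx
      obtain ⟨x1, x2⟩ := x
      obtain ⟨hlt, h1, h2⟩ := (hmem' _).mp hx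
      simp only at hlt h1 h2
      have hx1 : x1 ∈ Set.range emb := by
        rw [Finset.range_orderEmbOfFin]
        exact Finset.mem_coe.mpr (Finset.mem_erase.mpr ⟨h1, Finset.mem_univ _⟩)
      have hx2 : x2 ∈ Set.range emb := by
        rw [Finset.range_orderEmbOfFin]
        exact Finset.mem_coe.mpr (Finset.mem_erase.mpr ⟨h2, Finset.mem_univ _⟩)
      obtain ⟨k, hk⟩ := hx1
      obtain ⟨l, hl⟩ := hx2
      have hkl : k < l := by
        rw [← emb.lt_iff_lt, hk, hl]; exact hlt
      refine ⟨⟨k, l⟩, by simp [Finset.mem_sigma, Finset.mem_Ioi, hkl], ?_⟩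
      simp only [Sigma.ext_iff, heq_eq_eq]
      exact ⟨hk, hl⟩
    · intro y hy
      rfl

lemma vdm_bound (m : ℕ) (β : Fin m → ℂ) :
    ∏ k, ∏ l ∈ Ioi k, Complex.abs (β k - β l)
      ≤ Real.sqrt m ^ m * ∏ k, max 1 (Complex.abs (β k)) ^ (m - 1) := by
  have h1 : ∏ k, ∏ l ∈ Ioi k, Complex.abs (β k - β l)
      = Complex.abs ((Matrix.vandermonde β).det) := by
    rw [Matrix.det_vandermonde, map_prod]
    refine Finset.prod_congr rfl fun k _ => ?_
    rw [map_prod]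
    exact Finset.prod_congr rfl fun l _ => (Complex.abs.map_sub (β k) (β l))
  rw [h1]
  refine (hadamard_ineq _).trans ?_
  have h2 : ∀ i : Fin m, Real.sqrt (∑ j, Complex.abs (Matrix.vandermonde β i j) ^ 2)
      ≤ Real.sqrt m * max 1 (Complex.abs (β i)) ^ (m - 1) := by
    intro i
    set c := max 1 (Complex.abs (β i)) with hc
    have hc1 : (1 : ℝ) ≤ c := le_max_left _ _
    have hc0 : (0 : ℝ) ≤ c := zero_le_one.trans hc1
    have hb : Complex.abs (β i) ≤ c := le_max_right _ _
    have hsum : ∑ j : Fin m, Complex.abs (Matrix.vandermonde β i j) ^ 2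
        ≤ (m : ℝ) * (c ^ (m - 1)) ^ 2 := by
      calc ∑ j : Fin m, Complex.abs (Matrix.vandermonde β i j) ^ 2
          ≤ ∑ _j : Fin m, (c ^ (m - 1)) ^ 2 := by
            refine Finset.sum_le_sum fun j _ => ?_
            rw [Matrix.vandermonde_apply, map_pow]
            rw [← pow_mul, ← pow_mul]
            calc Complex.abs (β i) ^ ((j : ℕ) * 2) ≤ c ^ ((j : ℕ) * 2) :=
                pow_le_pow_left₀ (Complex.abs.nonneg _) hb _
              _ ≤ c ^ ((m - 1) * 2) := by
                  refine pow_le_pow_right₀ hc1 ?_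
                  have := j.2
                  omega
        _ = (m : ℝ) * (c ^ (m - 1)) ^ 2 := by
            rw [Finset.sum_const, Finset.card_univ, Fintype.card_fin, nsmul_eq_mul]
    calc Real.sqrt (∑ j, Complex.abs (Matrix.vandermonde β i j) ^ 2)
        ≤ Real.sqrt ((m : ℝ) * (c ^ (m - 1)) ^ 2) := Real.sqrt_le_sqrt hsum
      _ = Real.sqrt m * c ^ (m - 1) := by
          rw [Real.sqrt_mul (Nat.cast_nonneg m), Real.sqrt_sq (pow_nonneg hc0 _)]
  calc ∏ i, Real.sqrt (∑ j, Complex.abs (Matrix.vandermonde β i j) ^ 2)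
      ≤ ∏ i, Real.sqrt m * max 1 (Complex.abs (β i)) ^ (m - 1) :=
        Finset.prod_le_prod (fun i _ => Real.sqrt_nonneg _) (fun i _ => h2 i)
    _ = Real.sqrt m ^ m * ∏ k, max 1 (Complex.abs (β k)) ^ (m - 1) := by
        rw [Finset.prod_mul_distrib, Finset.prod_const, Finset.card_univ, Fintype.card_fin]

set_option maxHeartbeats 1000000 in
open Polynomial Finset in
theorem stmt_14 (n : ℕ) (hn : 2 ≤ n) (f : Polynomial ℂ) (hdeg : f.natDegree = n)
    (α : Fin n → ℂ)
    (hroots : f = C f.leadingCoeff * ∏ i, (X - C (α i)))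
    (M D : ℝ)
    (hM : M = ‖f.leadingCoeff‖ * ∏ i, max 1 (‖α i‖))
    (hD : D = (‖f.leadingCoeff‖) ^ (2 * n - 2) *
      ‖∏ i, ∏ j ∈ univ.filter (fun j => i < j), (α i - α j) ^ 2‖)
    (z : ℂ) :
    ‖f.eval z‖ ≥
      Real.sqrt D / ((n : ℝ) ^ (((n : ℝ) - 1) / 2) * 2 ^ (n - 1) * M ^ (n - 2)) *
        (univ.inf' ⟨⟨0, by omega⟩, mem_univ _⟩ fun i => ‖z - α i‖) := by
  simp only [Complex.norm_eq_abs] at hM hD ⊢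
  classical
  suffices key : ∀ H : (Finset.univ : Finset (Fin n)).Nonempty,
      Complex.abs (f.eval z) ≥
        Real.sqrt D / ((n : ℝ) ^ (((n : ℝ) - 1) / 2) * 2 ^ (n - 1) * M ^ (n - 2)) *
          (univ.inf' H fun i => Complex.abs (z - α i)) from key _
  intro H
  -- basic facts
  have hf0 : f ≠ 0 := by
    intro h
    rw [h, natDegree_zero] at hdeg
    omega
  have ha : f.leadingCoeff ≠ 0 := leadingCoeff_ne_zero.mpr hf0
  have haabs : 0 < Complex.abs f.leadingCoeff := Complex.abs.pos ha
  have hMpos : 0 < M := by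
    rw [hM]
    refine mul_pos haabs (Finset.prod_pos fun i _ => lt_of_lt_of_le one_pos (le_max_left _ _))
  have hNpos : 0 < (n : ℝ) ^ (((n : ℝ) - 1) / 2) :=
    Real.rpow_pos_of_pos (by positivity) _
  have hKpos : 0 < (n : ℝ) ^ (((n : ℝ) - 1) / 2) * 2 ^ (n - 1) * M ^ (n - 2) := by
    exact mul_pos (mul_pos hNpos (pow_pos two_pos _)) (pow_pos hMpos _)
  -- the minimizing index
  obtain ⟨i₀, -, hi₀⟩ := Finset.exists_mem_eq_inf' H (fun i => Complex.abs (z - α i))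
  rw [hi₀]
  have hmin : ∀ j : Fin n, Complex.abs (z - α i₀) ≤ Complex.abs (z - α j) := fun j => by
    rw [← hi₀]; exact Finset.inf'_le _ (Finset.mem_univ j)
  set μ := Complex.abs (z - α i₀) with hμdef
  clear_value μ
  have hminabs : ∀ j : Fin n, Complex.abs (z - α i₀) ≤ Complex.abs (z - α j) := by
    intro j
    rw [← hμdef]
    exact hmin j
  -- evaluation formula
  have heval : Complex.abs (f.eval z)
      = Complex.abs f.leadingCoeff * ∏ i, Complex.abs (z - α i) := by
    conv_lhs => rw [hroots]
    rw [eval_mul, eval_C, eval_prod, map_mul, map_prod]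
    congr 1
    exact Finset.prod_congr rfl fun i _ => by rw [eval_sub, eval_X, eval_C]
  -- trivial case μ = 0
  rcases eq_or_lt_of_le (Complex.abs.nonneg (z - α i₀)) with h0 | hμpos
  · rw [← hμdef] at h0
    rw [← h0, mul_zero]
    exact Complex.abs.nonneg _
  rw [← hμdef] at hμpos
  -- the square root of the discriminant
  have hIoi : ∀ i : Fin n, univ.filter (fun j => i < j) = Ioi i := fun i => by ext j; simp
  set Pall := ∏ i, ∏ j ∈ Ioi i, Complex.abs (α i - α j) with hPalldef
  clear_value Pall
  have hPallnn : 0 ≤ Pall := by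
    rw [hPalldef]
    exact Finset.prod_nonneg fun i _ => Finset.prod_nonneg fun j _ => Complex.abs.nonneg _
  have hsqrtD : Real.sqrt D = Complex.abs f.leadingCoeff ^ (n - 1) * Pall := by
    have : D = (Complex.abs f.leadingCoeff ^ (n - 1) * Pall) ^ 2 := by
      rw [hD, map_prod]
      rw [show 2 * n - 2 = (n - 1) * 2 from by omega, pow_mul, mul_pow, hPalldef]
      congr 1
      rw [← Finset.prod_pow]
      refine Finset.prod_congr rfl fun i _ => ?_
      rw [hIoi i, map_prod, ← Finset.prod_pow]
      exact Finset.prod_congr rfl fun j _ => by rw [map_pow]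
    rw [this, Real.sqrt_sq (mul_nonneg (pow_nonneg (Complex.abs.nonneg _) _) hPallnn)]
  -- split the pair product
  have hcard : (univ.erase i₀).card = n - 1 := by
    rw [Finset.card_erase_of_mem (Finset.mem_univ _), Finset.card_univ, Fintype.card_fin]
  set emb := (univ.erase i₀).orderEmbOfFin hcard with hembdef
  have hsplit := pair_prod_split (fun i j => Complex.abs (α i - α j))
    (fun i j => Complex.abs.map_sub _ _) i₀ hcard
  -- bound on the pairs involving i₀
  set Pe := ∏ j ∈ univ.erase i₀, Complex.abs (z - α j) with hPedef
  clear_value Pe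
  have hPenn : 0 ≤ Pe := by
    rw [hPedef]
    exact Finset.prod_nonneg fun j _ => Complex.abs.nonneg _
  have hA : (∏ j ∈ univ.erase i₀, Complex.abs (α i₀ - α j)) ≤ 2 ^ (n - 1) * Pe := by
    have : (∏ j ∈ univ.erase i₀, Complex.abs (α i₀ - α j))
        ≤ ∏ j ∈ univ.erase i₀, 2 * Complex.abs (z - α j) := by
      refine Finset.prod_le_prod (fun j _ => Complex.abs.nonneg _) (fun j _ => ?_)
      calc Complex.abs (α i₀ - α j)
          ≤ Complex.abs (α i₀ - z) + Complex.abs (z - α j) := Complex.abs.sub_le _ _ _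
        _ ≤ Complex.abs (z - α j) + Complex.abs (z - α j) := by
            rw [Complex.abs.map_sub]
            exact add_le_add_left (hminabs j) _
        _ = 2 * Complex.abs (z - α j) := (two_mul _).symm
    refine this.trans ?_
    rw [Finset.prod_mul_distrib, Finset.prod_const, hcard, hPedef]
  -- bound on the pairs not involving i₀
  set Pm := ∏ j ∈ univ.erase i₀, max 1 (Complex.abs (α j)) with hPmdef
  clear_value Pm
  have hPm1 : (1:ℝ) ≤ Pm := by
    rw [hPmdef]
    have : ∏ _j ∈ univ.erase i₀, (1:ℝ) ≤ ∏ j ∈ univ.erase i₀, max 1 (Complex.abs (α j)) :=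
      Finset.prod_le_prod (fun _ _ => zero_le_one) (fun j _ => le_max_left _ _)
    simpa using this
  have hPmnn : 0 ≤ Pm := zero_le_one.trans hPm1
  have htransfer : ∀ h : Fin n → ℝ, ∏ k, h (emb k) = ∏ j ∈ univ.erase i₀, h j := by
    intro h
    refine Finset.prod_bij (fun k _ => emb k) (fun k _ => (univ.erase i₀).orderEmbOfFin_mem hcard k)
      (fun k _ l _ hkl => emb.injective hkl) ?_ (fun k _ => rfl)
    intro j hj
    have : j ∈ Set.range emb := by
      rw [hembdef, Finset.range_orderEmbOfFin]
      exact Finset.mem_coe.mpr hj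
    obtain ⟨k, hk⟩ := this
    exact ⟨k, Finset.mem_univ _, hk⟩
  have hB : (∏ k, ∏ l ∈ Ioi k, Complex.abs (α (emb k) - α (emb l)))
      ≤ Real.sqrt (n - 1 : ℕ) ^ (n - 1) * Pm ^ (n - 2) := by
    have := vdm_bound (n - 1) (fun k => α (emb k))
    refine this.trans ?_
    have h1 : (n : ℕ) - 1 - 1 = n - 2 := by omega
    rw [h1]
    rw [show (∏ k : Fin (n-1), max 1 (Complex.abs (α (emb k))) ^ (n - 2))
        = (∏ k : Fin (n-1), max 1 (Complex.abs (α (emb k)))) ^ (n - 2) from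
      Finset.prod_pow _ _ _]
    rw [htransfer (fun j => max 1 (Complex.abs (α j))), ← hPmdef]
  -- sqrt(n-1)^(n-1) ≤ n^((n-1)/2)
  have hS : Real.sqrt (n - 1 : ℕ) ^ (n - 1) ≤ (n : ℝ) ^ (((n : ℝ) - 1) / 2) := by
    have h1 : Real.sqrt ((n : ℕ) - 1 : ℕ) ^ (n - 1)
        = ((n - 1 : ℕ) : ℝ) ^ ((((n - 1 : ℕ) : ℝ)) / 2) := by
      rw [Real.sqrt_eq_rpow, ← Real.rpow_natCast (((n - 1 : ℕ) : ℝ) ^ ((1:ℝ)/2)) (n - 1),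
        ← Real.rpow_mul (Nat.cast_nonneg _)]
      congr 1
      ring
    rw [h1]
    have h2 : (((n - 1 : ℕ) : ℝ)) = (n : ℝ) - 1 := by
      push_cast [Nat.cast_sub (by omega : 1 ≤ n)]
      ring
    rw [h2]
    have hnn : (0:ℝ) ≤ (n:ℝ) - 1 := by
      have h3 : (0:ℝ) ≤ ((n - 1 : ℕ) : ℝ) := Nat.cast_nonneg _
      rw [h2] at h3
      exact h3
    exact Real.rpow_le_rpow hnn (by linarith) (by linarith)
  have hSnn : 0 ≤ Real.sqrt (n - 1 : ℕ) ^ (n - 1) := by positivity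
  -- the Mahler measure bound
  have hMle : Complex.abs f.leadingCoeff * Pm ≤ M := by
    rw [hM, ← Finset.mul_prod_erase univ _ (Finset.mem_univ i₀), ← hPmdef]
    calc Complex.abs f.leadingCoeff * Pm
        ≤ Complex.abs f.leadingCoeff * (max 1 (Complex.abs (α i₀)) * Pm) := by
          refine mul_le_mul_of_nonneg_left ?_ haabs.le
          exact le_mul_of_one_le_left hPmnn (le_max_left _ _)
      _ = Complex.abs f.leadingCoeff * (max 1 (Complex.abs (α i₀)) * Pm) := rfl
  -- positivity of Pe
  have hPepos : 0 < Pe := by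
    rw [hPedef]
    exact Finset.prod_pos fun j _ => lt_of_lt_of_le hμpos (hmin j)
  -- final assembly
  rw [ge_iff_le, div_mul_eq_mul_div, div_le_iff₀ hKpos]
  have hfz : Complex.abs (f.eval z) = Complex.abs f.leadingCoeff * (μ * Pe) := by
    rw [heval, ← Finset.mul_prod_erase univ _ (Finset.mem_univ i₀), ← hPedef, ← hμdef]
  have hpow : Complex.abs f.leadingCoeff ^ (n - 1)
      = Complex.abs f.leadingCoeff * Complex.abs f.leadingCoeff ^ (n - 2) := by
    rw [show n - 1 = (n - 2) + 1 from by omega, pow_succ]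
    ring
  have keybound : Complex.abs f.leadingCoeff ^ (n - 2) *
      (Real.sqrt (n - 1 : ℕ) ^ (n - 1) * Pm ^ (n - 2))
        ≤ (n : ℝ) ^ (((n : ℝ) - 1) / 2) * M ^ (n - 2) := by
    calc Complex.abs f.leadingCoeff ^ (n - 2) *
        (Real.sqrt (n - 1 : ℕ) ^ (n - 1) * Pm ^ (n - 2))
        = Real.sqrt (n - 1 : ℕ) ^ (n - 1) *
            (Complex.abs f.leadingCoeff * Pm) ^ (n - 2) := by
          rw [mul_pow]; ring
      _ ≤ (n : ℝ) ^ (((n : ℝ) - 1) / 2) * M ^ (n - 2) := by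
          exact mul_le_mul hS (pow_le_pow_left₀ (mul_nonneg haabs.le hPmnn) hMle _)
            (pow_nonneg (mul_nonneg haabs.le hPmnn) _) hNpos.le
  calc Real.sqrt D * μ
      = Complex.abs f.leadingCoeff ^ (n - 1) * Pall * μ := by rw [hsqrtD]
    _ = Complex.abs f.leadingCoeff ^ (n - 1) *
          ((∏ j ∈ univ.erase i₀, Complex.abs (α i₀ - α j)) *
            (∏ k, ∏ l ∈ Ioi k, Complex.abs (α (emb k) - α (emb l)))) * μ := by
        rw [hPalldef, hsplit]
    _ ≤ Complex.abs f.leadingCoeff ^ (n - 1) *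
          ((2 ^ (n - 1) * Pe) * (Real.sqrt (n - 1 : ℕ) ^ (n - 1) * Pm ^ (n - 2))) * μ := by
        refine mul_le_mul_of_nonneg_right ?_ hμpos.le
        refine mul_le_mul_of_nonneg_left ?_ (pow_nonneg (Complex.abs.nonneg _) _)
        refine mul_le_mul hA hB ?_ (mul_nonneg (by positivity) hPenn)
        exact Finset.prod_nonneg fun k _ => Finset.prod_nonneg fun l _ => Complex.abs.nonneg _
    _ = (Complex.abs f.leadingCoeff * (μ * Pe)) *
          (2 ^ (n - 1) * (Complex.abs f.leadingCoeff ^ (n - 2) *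
            (Real.sqrt (n - 1 : ℕ) ^ (n - 1) * Pm ^ (n - 2)))) := by
        rw [hpow]; ring
    _ ≤ (Complex.abs f.leadingCoeff * (μ * Pe)) *
          (2 ^ (n - 1) * ((n : ℝ) ^ (((n : ℝ) - 1) / 2) * M ^ (n - 2))) := by
        refine mul_le_mul_of_nonneg_left ?_
          (mul_nonneg haabs.le (mul_nonneg hμpos.le hPenn))
        exact mul_le_mul_of_nonneg_left keybound (by positivity)
    _ = Complex.abs (f.eval z) *
          ((n : ℝ) ^ (((n : ℝ) - 1) / 2) * 2 ^ (n - 1) * M ^ (n - 2)) := by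
        rw [hfz]; ring
end
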